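/- arXiv:math/0508034 — 2 statements merged into one kernel-verified Lean document; each statement's English description precedes it below -/
import Mathlib

section
/- Let m ≥ 3 be odd, let k be a positive integer with gcd(k, m) = 1, and set d = 2^k + 1 (a Gold exponent). Assume the power function x ↦ x^d on F = GF(2^m) is maximum nonlinear. Then for all α, β ∈ F \ {0} with α ≠ β and all i, j ∈ GF(2), the cardinality |H^{i,j}(α,β) ∩ D_d| belongs to the set {2^(m-3), 2^(m-3) - 2^((m-3)/2), 2^(m-3) + 2^((m-3)/2)}. -/
attribute [local instance] Classical.propDecidable

noncomputable instance (m : ℕ) : Fintype (GaloisField 2 m) := Fintype.ofFinite _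

/-- The absolute trace map from `GF(2^m)` to `GF(2)`. -/
noncomputable def tr (m : ℕ) (x : GaloisField 2 m) : ZMod 2 :=
  Algebra.trace (ZMod 2) (GaloisField 2 m) x

/-- `(-1)^t` as an integer, for `t ∈ GF(2)`. -/
def chi (t : ZMod 2) : ℤ := (-1) ^ t.val

/-- The Walsh coefficient `∑_{x ∈ F} (-1)^(tr(γx + βx^d))` of the power map `x ↦ x^d`. -/
noncomputable def walsh (m d : ℕ) (β γ : GaloisField 2 m) : ℤ :=
  ∑ x : GaloisField 2 m, chi (tr m (γ * x + β * x ^ d))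

/-- The power function `x ↦ x^d` on `GF(2^m)` is maximum nonlinear (almost bent). -/
def MaxNonlinear (m d : ℕ) : Prop :=
  ∀ β : GaloisField 2 m, β ≠ 0 → ∀ γ : GaloisField 2 m,
    walsh m d β γ ∈ ({0, 2 ^ ((m + 1) / 2), -(2 ^ ((m + 1) / 2))} : Set ℤ)

/-- `D_d = {x ∈ F : tr(x^d) = 1}`. -/
noncomputable def Dd (m d : ℕ) : Finset (GaloisField 2 m) :=
  Finset.univ.filter (fun x => tr m (x ^ d) = 1)

/-- `H^i(α) = {x ∈ F : tr(αx) = i}`. -/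
noncomputable def Hi (m : ℕ) (α : GaloisField 2 m) (i : ZMod 2) :
    Finset (GaloisField 2 m) :=
  Finset.univ.filter (fun x => tr m (α * x) = i)

/-- `H^{i,j}(α,β) = {x ∈ F : tr(αx) = i and tr(βx) = j}`. -/
noncomputable def Hij (m : ℕ) (α β : GaloisField 2 m) (i j : ZMod 2) :
    Finset (GaloisField 2 m) :=
  Finset.univ.filter (fun x => tr m (α * x) = i ∧ tr m (β * x) = j)

lemma chi_add : ∀ a b : ZMod 2, chi (a + b) = chi a * chi b := by decide
lemma chi_zero : chi 0 = 1 := by decide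
lemma chi_one : chi 1 = -1 := by decide

lemma tr_add (m : ℕ) (x y : GaloisField 2 m) : tr m (x + y) = tr m x + tr m y :=
  map_add _ _ _

lemma tr_zero (m : ℕ) : tr m 0 = 0 := map_zero _

lemma tr_frob (m : ℕ) (x : GaloisField 2 m) : tr m (x ^ 2) = tr m x := by
  have : Fact (Nat.Prime 2) := ⟨Nat.prime_two⟩
  let e : (GaloisField 2 m) ≃ₐ[ZMod 2] (GaloisField 2 m) :=
    AlgEquiv.ofRingEquiv (f := frobeniusEquiv (GaloisField 2 m) 2)
      (fun c => by
        show (algebraMap (ZMod 2) (GaloisField 2 m) c) ^ 2 = _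
        rw [← map_pow, ZMod.pow_card])
  have h := Algebra.trace_eq_of_algEquiv e x
  have he : e x = x ^ 2 := rfl
  rw [he] at h
  exact h

lemma tr_frob_pow (m : ℕ) (j : ℕ) (x : GaloisField 2 m) : tr m (x ^ 2 ^ j) = tr m x := by
  induction j with
  | zero => simp
  | succ n ih => rw [pow_succ, pow_mul, tr_frob, ih]

lemma card_F (m : ℕ) (hm : m ≠ 0) : Fintype.card (GaloisField 2 m) = 2 ^ m := by
  rw [Fintype.card_eq_nat_card, GaloisField.card 2 m hm]

lemma pow_card_F (m : ℕ) (hm : m ≠ 0) (x : GaloisField 2 m) : x ^ 2 ^ m = x := by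
  have := FiniteField.pow_card x
  rwa [card_F m hm] at this

lemma tr_one (m : ℕ) (hm : m ≠ 0) (hodd : Odd m) : tr m 1 = 1 := by
  have h1 : tr m 1 = (Module.finrank (ZMod 2) (GaloisField 2 m) : ZMod 2) := by
    have := Algebra.trace_algebraMap (R := ZMod 2) (S := GaloisField 2 m) (1 : ZMod 2)
    simpa [tr, Algebra.smul_def] using this
  rw [h1, GaloisField.finrank 2 hm]
  obtain ⟨t, ht⟩ := hodd
  subst ht
  push_cast
  simp [show ((2:ZMod 2)) = 0 from rfl]

lemma chi_add_one (a : ZMod 2) : chi (a + 1) = - chi a := by revert a; decide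

lemma zmod2_eq_one {a : ZMod 2} (h : a ≠ 0) : a = 1 := by revert h; revert a; decide

lemma sum_chi_eq_zero (m : ℕ) (hm : m ≠ 0) {c : GaloisField 2 m} (hc : c ≠ 0) :
    ∑ x : GaloisField 2 m, chi (tr m (c * x)) = 0 := by
  have : Fact (Nat.Prime 2) := ⟨Nat.prime_two⟩
  obtain ⟨b, hb⟩ : ∃ b, tr m (c * b) ≠ 0 := by
    have htr := (traceForm_nondegenerate (ZMod 2) (GaloisField 2 m)).1 c
    by_contra hf
    push_neg at hf
    exact hc (htr (fun y => by simpa [Algebra.traceForm_apply, tr] using hf y))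
  have hb1 : tr m (c * b) = 1 := zmod2_eq_one hb
  have key : ∑ x : GaloisField 2 m, chi (tr m (c * x))
      = ∑ x : GaloisField 2 m, chi (tr m (c * (x + b))) :=
    (Fintype.sum_equiv (Equiv.addRight b) _ _ (fun x => rfl)).symm
  have key2 : ∑ x : GaloisField 2 m, chi (tr m (c * (x + b)))
      = - ∑ x : GaloisField 2 m, chi (tr m (c * x)) := by
    rw [← Finset.sum_neg_distrib]
    exact Finset.sum_congr rfl (fun x _ => by rw [mul_add, tr_add, hb1, chi_add_one])
  rw [key2] at key
  linarith

lemma iter_fix (m : ℕ) (K : ℕ) (z : GaloisField 2 m) (h : z ^ 2 ^ K = z) :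
    ∀ a : ℕ, z ^ 2 ^ (K * a) = z := by
  intro a
  induction a with
  | zero => simp
  | succ n ih => rw [Nat.mul_succ, pow_add, pow_mul, ih, h]

lemma fixed_pt (m k : ℕ) (hm3 : 3 ≤ m) (hmodd : Odd m) (hkm : Nat.gcd k m = 1)
    (z : GaloisField 2 m) (hz : z ^ 2 ^ (2 * k) = z) : z = 0 ∨ z = 1 := by
  have hm : m ≠ 0 := by omega
  have hcop : Nat.Coprime (2 * k) m :=
    Nat.Coprime.mul (Nat.coprime_two_left.mpr hmodd) hkm
  obtain ⟨a, -, ha⟩ := Nat.exists_mul_mod_eq_one_of_coprime hcop (by omega)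
  set q := 2 * k * a / m with hq
  have hdiv : 2 * k * a = m * q + 1 := by
    conv_lhs => rw [← Nat.div_add_mod (2 * k * a) m]
    rw [ha]
  have h1 : z ^ 2 ^ (2 * k * a) = z := iter_fix m (2 * k) z hz a
  have h2 : z ^ 2 ^ (m * q) = z := iter_fix m m z (pow_card_F m hm z) q
  have h3 : z ^ 2 = z := by
    have : z ^ 2 ^ (m * q + 1) = z := by rw [← hdiv]; exact h1
    rwa [pow_succ, pow_mul, h2] at this
  have h4 : z * (z - 1) = 0 := by
    have : z * z = z := by rw [← sq]; exact h3
    rw [mul_sub, mul_one, this, sub_self]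
  rcases mul_eq_zero.mp h4 with h | h
  · exact Or.inl h
  · exact Or.inr (by linear_combination h)

lemma frob_inv_pow (m : ℕ) : ∀ (k : ℕ) (z : GaloisField 2 m),
    (((frobeniusEquiv (GaloisField 2 m) 2).symm)^[k] z) ^ 2 ^ k = z := by
  have : Fact (Nat.Prime 2) := ⟨Nat.prime_two⟩
  intro k
  induction k with
  | zero => intro z; simp
  | succ n ih =>
    intro z
    rw [Function.iterate_succ_apply, pow_succ, pow_mul, ih]
    have : ((frobeniusEquiv (GaloisField 2 m) 2).symm z) ^ 2
        = frobeniusEquiv (GaloisField 2 m) 2 ((frobeniusEquiv (GaloisField 2 m) 2).symm z) := rfl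
    rw [this, RingEquiv.apply_symm_apply]

lemma walsh_sq (m k d : ℕ) (hm3 : 3 ≤ m) (hmodd : Odd m) (hk : 0 < k)
    (hkm : Nat.gcd k m = 1) (hd : d = 2 ^ k + 1) (γ : GaloisField 2 m) :
    (walsh m d 1 γ) ^ 2 = 2 ^ m * (1 - chi (tr m γ)) := by
  have : Fact (Nat.Prime 2) := ⟨Nat.prime_two⟩
  have hm : m ≠ 0 := by omega
  have hchar : ∀ w : GaloisField 2 m, w + w = 0 := fun w => CharTwo.add_self_eq_zero w
  have h2F : (2 : GaloisField 2 m) = 0 := by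
    linear_combination hchar 1
  -- rewrite walsh with β = 1
  have hw : walsh m d 1 γ = ∑ x : GaloisField 2 m, chi (tr m (γ * x + x ^ d)) := by
    unfold walsh; simp [one_mul]
  -- the field identity
  have hfield : ∀ x z : GaloisField 2 m, x ^ d + (x + z) ^ d
      = x ^ 2 ^ k * z + z ^ 2 ^ k * x + z ^ d := by
    intro x z
    have hb : (x + z) ^ 2 ^ k = x ^ 2 ^ k + z ^ 2 ^ k := add_pow_char_pow x z 2 k
    rw [hd, pow_succ, pow_succ, pow_succ, hb]
    linear_combination (x ^ 2 ^ k * x) * h2F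
  -- inverse frobenius
  set ψ : GaloisField 2 m → GaloisField 2 m := ⇑(frobeniusEquiv (GaloisField 2 m) 2).symm with hψ
  have hinner : ∀ z : GaloisField 2 m, (∑ x : GaloisField 2 m, chi (tr m (γ * z + (x ^ d + (x + z) ^ d))))
      = if z = 0 ∨ z = 1 then chi (tr m (γ * z + z ^ d)) * 2 ^ m else 0 := by
    intro z
    set w : GaloisField 2 m := ψ^[k] z with hwdef
    have hwk : w ^ 2 ^ k = z := frob_inv_pow m k z
    have hsplit : ∀ x : GaloisField 2 m, chi (tr m (γ * z + (x ^ d + (x + z) ^ d)))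
        = chi (tr m (γ * z + z ^ d)) * chi (tr m ((w + z ^ 2 ^ k) * x)) := by
      intro x
      rw [hfield x z]
      have e1 : tr m (x ^ 2 ^ k * z) = tr m (x * w) := by
        conv_lhs => rw [← hwk, ← mul_pow, tr_frob_pow]
      have e2 : γ * z + (x ^ 2 ^ k * z + z ^ 2 ^ k * x + z ^ d)
          = (γ * z + z ^ d) + (x ^ 2 ^ k * z + z ^ 2 ^ k * x) := by ring
      rw [e2, tr_add, chi_add]
      congr 1
      rw [tr_add, e1, ← tr_add]
      congr 1
      ring
    rw [Finset.sum_congr rfl (fun x _ => hsplit x), ← Finset.mul_sum]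
    by_cases hc : w + z ^ 2 ^ k = 0
    · -- z ∈ {0, 1}
      have hz01 : z = 0 ∨ z = 1 := by
        apply fixed_pt m k hm3 hmodd hkm
        have hwz : w = z ^ 2 ^ k := by
          have := hchar w
          calc w = w + (w + z ^ 2 ^ k) := by rw [hc, add_zero]
          _ = (w + w) + z ^ 2 ^ k := by ring
          _ = z ^ 2 ^ k := by rw [hchar, zero_add]
        calc z ^ 2 ^ (2 * k) = (z ^ 2 ^ k) ^ 2 ^ k := by
              rw [← pow_mul, ← pow_add]; ring_nf
        _ = w ^ 2 ^ k := by rw [hwz]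
        _ = z := hwk
      rw [if_pos hz01, hc]
      have hzero : (∑ x : GaloisField 2 m, chi (tr m ((0 : GaloisField 2 m) * x))) = 2 ^ m := by
        have hone : ∀ x : GaloisField 2 m, chi (tr m ((0 : GaloisField 2 m) * x)) = 1 := by
          intro x; rw [zero_mul, tr_zero, chi_zero]
        rw [Finset.sum_congr rfl (fun x _ => hone x), Finset.sum_const, Finset.card_univ,
          card_F m hm, nsmul_eq_mul, mul_one]
        push_cast
        ring
      rw [hzero]
    · rw [sum_chi_eq_zero m hm hc, mul_zero, if_neg]
      rintro (rfl | rfl)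
      · apply hc
        have : w = 0 := by
          rw [hwdef]
          have hψ0 : ψ 0 = 0 := map_zero (frobeniusEquiv (GaloisField 2 m) 2).symm
          exact Function.iterate_fixed hψ0 k
        rw [this, zero_pow (Nat.two_pow_pos k).ne', add_zero]
      · apply hc
        have : w = 1 := by
          rw [hwdef]
          have hψ1 : ψ 1 = 1 := map_one (frobeniusEquiv (GaloisField 2 m) 2).symm
          exact Function.iterate_fixed hψ1 k
        rw [this, one_pow]
        exact hchar 1
  -- now compute the square
  rw [hw, sq, Finset.sum_mul_sum]
  have hre : ∀ x : GaloisField 2 m, (∑ y : GaloisField 2 m, chi (tr m (γ * x + x ^ d)) * chi (tr m (γ * y + y ^ d)))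
      = ∑ z : GaloisField 2 m, chi (tr m (γ * z + (x ^ d + (x + z) ^ d))) := by
    intro x
    rw [← (Fintype.sum_equiv (Equiv.addLeft x)
      (fun z => chi (tr m (γ * x + x ^ d)) * chi (tr m (γ * (x + z) + (x + z) ^ d))) _
      (fun z => rfl))]
    apply Finset.sum_congr rfl
    intro z _
    rw [← chi_add, ← tr_add]
    congr 2
    have : γ * x + x ^ d + (γ * (x + z) + (x + z) ^ d)
        = γ * (x + x) * 1 + γ * z + (x ^ d + (x + z) ^ d) := by ring
    rw [this, hchar x]
    ring
  rw [Finset.sum_congr rfl (fun x _ => hre x), Finset.sum_comm,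
    Finset.sum_congr rfl (fun z _ => hinner z)]
  -- sum of the if over z : only z = 0, 1 contribute
  rw [← Finset.sum_subset (Finset.subset_univ ({0, 1} : Finset (GaloisField 2 m)))
    (fun z _ hz => by
      rw [if_neg]
      simp only [Finset.mem_insert, Finset.mem_singleton] at hz
      tauto)]
  rw [Finset.sum_pair (zero_ne_one (α := GaloisField 2 m))]
  rw [if_pos (Or.inl rfl), if_pos (Or.inr rfl)]
  have hz0 : γ * 0 + (0 : GaloisField 2 m) ^ d = 0 := by
    rw [mul_zero, zero_pow (by rw [hd]; exact Nat.succ_ne_zero _ : d ≠ 0), add_zero]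
  have hz1 : γ * 1 + (1 : GaloisField 2 m) ^ d = γ + 1 := by rw [mul_one, one_pow]
  rw [hz0, hz1, tr_zero, chi_zero, tr_add, chi_add, tr_one m hm hmodd, chi_one]
  ring

lemma chi_if_eq : ∀ u i : ZMod 2, (1 + chi i * chi u : ℤ) = if u = i then 2 else 0 := by decide

lemma chi_if_one : ∀ u : ZMod 2, (1 - chi u : ℤ) = if u = 1 then 2 else 0 := by decide

lemma zmod2_cases : ∀ a : ZMod 2, a = 0 ∨ a = 1 := by decide

lemma chi_cases : ∀ a : ZMod 2, chi a = 1 ∨ chi a = -1 := by decide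

lemma count_eq (m d : ℕ) (hm : m ≠ 0) (hdne : d ≠ 0) (α β : GaloisField 2 m)
    (hα : α ≠ 0) (hβ : β ≠ 0) (hαβ : α ≠ β) (i j : ZMod 2) :
    (8 : ℤ) * ((Hij m α β i j ∩ Dd m d).card : ℤ)
      = 2 ^ m - (walsh m d 1 0 + chi i * walsh m d 1 α + chi j * walsh m d 1 β
          + chi i * chi j * walsh m d 1 (α + β)) := by
  have hchar : ∀ w : GaloisField 2 m, w + w = 0 := fun w => CharTwo.add_self_eq_zero w
  have h2F : (2 : GaloisField 2 m) = 0 := by linear_combination hchar 1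
  have hab0 : α + β ≠ 0 := by
    intro h
    exact hαβ (by linear_combination h - β * h2F)
  -- card as a sum
  have hset : Hij m α β i j ∩ Dd m d
      = Finset.univ.filter
          (fun x => tr m (α * x) = i ∧ tr m (β * x) = j ∧ tr m (x ^ d) = 1) := by
    ext x
    simp [Hij, Dd, and_assoc]
  have h1 : ((Hij m α β i j ∩ Dd m d).card : ℤ)
      = ∑ x : GaloisField 2 m,
          (if tr m (α * x) = i ∧ tr m (β * x) = j ∧ tr m (x ^ d) = 1 then (1 : ℤ) else 0) := by
    rw [hset, Finset.card_filter]
    push_cast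
    rfl
  have hpt : ∀ x : GaloisField 2 m,
      (8 : ℤ) * (if tr m (α * x) = i ∧ tr m (β * x) = j ∧ tr m (x ^ d) = 1 then (1:ℤ) else 0)
      = (1 + chi i * chi (tr m (α * x))) * (1 + chi j * chi (tr m (β * x)))
          * (1 - chi (tr m (x ^ d))) := by
    intro x
    rw [chi_if_eq (tr m (α * x)) i, chi_if_eq (tr m (β * x)) j, chi_if_one (tr m (x ^ d))]
    by_cases h1 : tr m (α * x) = i <;> by_cases h2 : tr m (β * x) = j <;>
      by_cases h3 : tr m (x ^ d) = 1 <;> simp [h1, h2, h3]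
  have hexp : ∀ x : GaloisField 2 m,
      (1 + chi i * chi (tr m (α * x))) * (1 + chi j * chi (tr m (β * x)))
          * (1 - chi (tr m (x ^ d)))
      = 1 + chi i * chi (tr m (α * x)) + chi j * chi (tr m (β * x))
          + chi i * chi j * chi (tr m ((α + β) * x))
          - chi (tr m ((0:GaloisField 2 m) * x + x ^ d))
          - chi i * chi (tr m (α * x + x ^ d)) - chi j * chi (tr m (β * x + x ^ d))
          - chi i * chi j * chi (tr m ((α + β) * x + x ^ d)) := by
    intro x
    have hab : chi (tr m ((α + β) * x)) = chi (tr m (α * x)) * chi (tr m (β * x)) := by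
      rw [add_mul, tr_add, chi_add]
    have hac : chi (tr m (α * x + x ^ d)) = chi (tr m (α * x)) * chi (tr m (x ^ d)) := by
      rw [tr_add, chi_add]
    have hbc : chi (tr m (β * x + x ^ d)) = chi (tr m (β * x)) * chi (tr m (x ^ d)) := by
      rw [tr_add, chi_add]
    have habc : chi (tr m ((α + β) * x + x ^ d))
        = chi (tr m (α * x)) * chi (tr m (β * x)) * chi (tr m (x ^ d)) := by
      rw [tr_add, chi_add, hab]
    have h0c : chi (tr m ((0:GaloisField 2 m) * x + x ^ d)) = chi (tr m (x ^ d)) := by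
      rw [zero_mul, zero_add]
    rw [hab, hac, hbc, habc, h0c]
    ring
  have hwalsh : ∀ γ : GaloisField 2 m,
      (∑ x : GaloisField 2 m, chi (tr m (γ * x + x ^ d))) = walsh m d 1 γ := by
    intro γ
    unfold walsh
    simp [one_mul]
  have hone : (∑ _x : GaloisField 2 m, (1:ℤ)) = 2 ^ m := by
    rw [Finset.sum_const, Finset.card_univ, card_F m hm, nsmul_eq_mul, mul_one]
    push_cast
    ring
  calc (8 : ℤ) * ((Hij m α β i j ∩ Dd m d).card : ℤ)
      = ∑ x : GaloisField 2 m,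
          (8:ℤ) * (if tr m (α * x) = i ∧ tr m (β * x) = j ∧ tr m (x ^ d) = 1
            then (1:ℤ) else 0) := by rw [h1, Finset.mul_sum]
    _ = ∑ x : GaloisField 2 m,
          ((1 + chi i * chi (tr m (α * x))) * (1 + chi j * chi (tr m (β * x)))
            * (1 - chi (tr m (x ^ d)))) := Finset.sum_congr rfl (fun x _ => hpt x)
    _ = ∑ x : GaloisField 2 m,
          (1 + chi i * chi (tr m (α * x)) + chi j * chi (tr m (β * x))
          + chi i * chi j * chi (tr m ((α + β) * x))
          - chi (tr m ((0:GaloisField 2 m) * x + x ^ d))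
          - chi i * chi (tr m (α * x + x ^ d)) - chi j * chi (tr m (β * x + x ^ d))
          - chi i * chi j * chi (tr m ((α + β) * x + x ^ d))) :=
        Finset.sum_congr rfl (fun x _ => hexp x)
    _ = (∑ _x : GaloisField 2 m, (1:ℤ))
          + chi i * (∑ x : GaloisField 2 m, chi (tr m (α * x)))
          + chi j * (∑ x : GaloisField 2 m, chi (tr m (β * x)))
          + chi i * chi j * (∑ x : GaloisField 2 m, chi (tr m ((α + β) * x)))
          - (∑ x : GaloisField 2 m, chi (tr m ((0:GaloisField 2 m) * x + x ^ d)))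
          - chi i * (∑ x : GaloisField 2 m, chi (tr m (α * x + x ^ d)))
          - chi j * (∑ x : GaloisField 2 m, chi (tr m (β * x + x ^ d)))
          - chi i * chi j * (∑ x : GaloisField 2 m, chi (tr m ((α + β) * x + x ^ d))) := by
        simp only [Finset.sum_add_distrib, Finset.sum_sub_distrib, ← Finset.mul_sum]
    _ = 2 ^ m - (walsh m d 1 0 + chi i * walsh m d 1 α + chi j * walsh m d 1 β
          + chi i * chi j * walsh m d 1 (α + β)) := by
        rw [hone, sum_chi_eq_zero m hm hα, sum_chi_eq_zero m hm hβ, sum_chi_eq_zero m hm hab0]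
        have e0 : (∑ x : GaloisField 2 m, chi (tr m ((0:GaloisField 2 m) * x + x ^ d)))
            = walsh m d 1 0 := hwalsh 0
        rw [e0, hwalsh α, hwalsh β, hwalsh (α + β)]
        ring

lemma signMulPM {e W c : ℤ} (he : e = 1 ∨ e = -1) (hW : W = c ∨ W = -c) :
    e * W = c ∨ e * W = -c := by
  rcases he with rfl | rfl <;> rcases hW with rfl | rfl
  · left; ring
  · right; ring
  · right; ring
  · left; ring

lemma final_step (m t : ℕ) (N : ℕ) (ht : m = 2 * t + 3) (S : ℤ)
    (hS : S = 0 ∨ S = 2 ^ (t + 3) ∨ S = -2 ^ (t + 3))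
    (h8 : (8 : ℤ) * N = 2 ^ m - S) :
    ((N : ℤ)) ∈ ({2 ^ (m - 3), 2 ^ (m - 3) - 2 ^ ((m - 3) / 2),
      2 ^ (m - 3) + 2 ^ ((m - 3) / 2)} : Set ℤ) := by
  have hm3 : m - 3 = 2 * t := by omega
  have hd2 : (m - 3) / 2 = t := by omega
  rw [hm3, hd2, ht] at *
  have h8' : (8:ℤ) ≠ 0 := by norm_num
  rcases hS with rfl | rfl | rfl
  · left
    apply mul_left_cancel₀ h8'
    rw [h8]
    ring
  · right; left
    apply mul_left_cancel₀ h8'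
    rw [h8]
    ring
  · right; right
    apply mul_left_cancel₀ h8'
    rw [h8]
    ring

/-- For a Gold exponent `d = 2^k + 1` with `gcd(k, m) = 1` on `GF(2^m)` (`m ≥ 3`
odd) whose power map is maximum nonlinear, all intersections of `D_d` with the codimension-2
subspaces `H^{i,j}(α,β)` have size `2^(m-3)` or `2^(m-3) ± 2^((m-3)/2)`. -/
theorem stmt0 (m : ℕ) (hm3 : 3 ≤ m) (hmodd : Odd m) (k : ℕ) (hk : 0 < k)
    (hkm : Nat.gcd k m = 1) (d : ℕ) (hd : d = 2 ^ k + 1)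
    (hmax : MaxNonlinear m d) :
    ∀ α β : GaloisField 2 m, α ≠ 0 → β ≠ 0 → α ≠ β → ∀ i j : ZMod 2,
      ((Hij m α β i j ∩ Dd m d).card : ℤ) ∈
        ({2 ^ (m - 3), 2 ^ (m - 3) - 2 ^ ((m - 3) / 2),
          2 ^ (m - 3) + 2 ^ ((m - 3) / 2)} : Set ℤ) := by
  intro α β hα hβ hαβ i j
  have hm : m ≠ 0 := by omega
  obtain ⟨t, ht⟩ : ∃ t, m = 2 * t + 3 := by
    obtain ⟨s, hs⟩ := hmodd
    exact ⟨s - 1, by omega⟩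
  -- walsh values
  have hval : ∀ γ : GaloisField 2 m,
      (tr m γ = 0 → walsh m d 1 γ = 0) ∧
      (tr m γ = 1 → walsh m d 1 γ = 2 ^ (t + 2) ∨ walsh m d 1 γ = -2 ^ (t + 2)) := by
    intro γ
    have hsq := walsh_sq m k d hm3 hmodd hk hkm hd γ
    constructor
    · intro h0
      rw [h0, chi_zero] at hsq
      have : walsh m d 1 γ ^ 2 = 0 := by rw [hsq]; ring
      exact sq_eq_zero_iff.mp this
    · intro h1
      rw [h1, chi_one] at hsq
      have hpow : (2:ℤ) ^ m * 2 = (2 ^ (t + 2)) ^ 2 := by rw [ht]; ring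
      have hfact : (walsh m d 1 γ - 2 ^ (t + 2)) * (walsh m d 1 γ + 2 ^ (t + 2)) = 0 := by
        linear_combination hsq + hpow
      rcases mul_eq_zero.mp hfact with h | h
      · left; linarith
      · right; linarith
  have h8 := count_eq m d hm (by rw [hd]; exact Nat.succ_ne_zero _) α β hα hβ hαβ i j
  have hW0 : walsh m d 1 0 = 0 := (hval 0).1 (tr_zero m)
  have htrab : tr m (α + β) = tr m α + tr m β := tr_add m α β
  rw [hW0] at h8
  have hci := chi_cases i
  have hcj := chi_cases j
  have hcij : chi i * chi j = 1 ∨ chi i * chi j = -1 := signMulPM hci (by exact hcj)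
  rcases zmod2_cases (tr m α) with ha | ha <;> rcases zmod2_cases (tr m β) with hb | hb
  · -- tr α = 0, tr β = 0
    have hWα := (hval α).1 ha
    have hWβ := (hval β).1 hb
    have hWab := (hval (α + β)).1 (by rw [htrab, ha, hb, add_zero])
    apply final_step m t _ ht 0 (Or.inl rfl)
    rw [h8, hWα, hWβ, hWab]
    ring
  · -- tr α = 0, tr β = 1
    have hWα := (hval α).1 ha
    have hWβ := (hval β).2 hb
    have hWab := (hval (α + β)).2 (by rw [htrab, ha, hb, zero_add])
    have hu := signMulPM hcj hWβ
    have hv := signMulPM hcij hWab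
    apply final_step m t _ ht
      (chi j * walsh m d 1 β + chi i * chi j * walsh m d 1 (α + β))
      ?_ (by rw [h8, hWα]; ring)
    rcases hu with hu | hu <;> rcases hv with hv | hv <;> rw [hu, hv]
    · right; left; rw [pow_succ]; ring
    · left; ring
    · left; ring
    · right; right; rw [pow_succ]; ring
  · -- tr α = 1, tr β = 0
    have hWα := (hval α).2 ha
    have hWβ := (hval β).1 hb
    have hWab := (hval (α + β)).2 (by rw [htrab, ha, hb, add_zero])
    have hu := signMulPM hci hWα
    have hv := signMulPM hcij hWab
    apply final_step m t _ ht
      (chi i * walsh m d 1 α + chi i * chi j * walsh m d 1 (α + β))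
      ?_ (by rw [h8, hWβ]; ring)
    rcases hu with hu | hu <;> rcases hv with hv | hv <;> rw [hu, hv]
    · right; left; rw [pow_succ]; ring
    · left; ring
    · left; ring
    · right; right; rw [pow_succ]; ring
  · -- tr α = 1, tr β = 1
    have hWα := (hval α).2 ha
    have hWβ := (hval β).2 hb
    have hWab := (hval (α + β)).1 (by rw [htrab, ha, hb]; decide)
    have hu := signMulPM hci hWα
    have hv := signMulPM hcj hWβ
    apply final_step m t _ ht
      (chi i * walsh m d 1 α + chi j * walsh m d 1 β)
      ?_ (by rw [h8, hWab]; ring)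
    rcases hu with hu | hu <;> rcases hv with hv | hv <;> rw [hu, hv]
    · right; left; rw [pow_succ]; ring
    · left; ring
    · left; ring
    · right; right; rw [pow_succ]; ring
end

section
/- For every x in the finite field GF(2^8) with 256 elements, tr(x^51 + (x+1)^51 + 1) = 0, where tr : GF(2^8) → GF(2) is the absolute trace; moreover there is no integer k with 51 = 2^k + 1. (This shows that the characterization 'tr(x^d + (x+1)^d + 1) = 0 for all x implies d = 2^k + 1' fails when m is even.) -/
attribute [local instance] Classical.propDecidable

noncomputable def frobAlg : GaloisField 2 8 ≃ₐ[ZMod 2] GaloisField 2 8 :=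
  AlgEquiv.ofRingEquiv (f := frobeniusEquiv (GaloisField 2 8) 2) (fun c => by
    simp [frobeniusEquiv_apply, frobenius_def, ← map_pow])

lemma tr_add' (a b : GaloisField 2 8) : tr 8 (a + b) = tr 8 a + tr 8 b := by
  simp [tr, map_add]

lemma tr_sq' (y : GaloisField 2 8) : tr 8 (y ^ 2) = tr 8 y := by
  have := Algebra.trace_eq_of_algEquiv frobAlg y
  simpa [tr, frobAlg, frobenius_def] using this

lemma tr_pow16' (y : GaloisField 2 8) : tr 8 (y ^ 16) = tr 8 y := by
  rw [show y ^ 16 = (((y ^ 2) ^ 2) ^ 2) ^ 2 by ring, tr_sq', tr_sq', tr_sq', tr_sq']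

lemma pow256' (x : GaloisField 2 8) : x ^ 256 = x := by
  have h := FiniteField.pow_card x
  have hc : Fintype.card (GaloisField 2 8) = 256 := by
    have := GaloisField.card 2 8 (by norm_num)
    simpa [Nat.card_eq_fintype_card] using this
  rwa [hc] at h


/-- In `GF(2^8)` one has `tr(x^51 + (x+1)^51 + 1) = 0` for all `x`, yet `51`
is not of the form `2^k + 1`; so the Gold characterization fails for even `m`. -/
theorem stmt13 :
    (∀ x : GaloisField 2 8, tr 8 (x ^ 51 + (x + 1) ^ 51 + 1) = 0) ∧
    ¬ ∃ k : ℕ, 51 = 2 ^ k + 1 := by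
  constructor
  · intro x
    have h2 : (x + 1) ^ 2 = x ^ 2 + 1 := by
      have := add_pow_char (p := 2) x (1 : GaloisField 2 8); simpa using this
    have h16 : (x + 1) ^ 16 = x ^ 16 + 1 := by
      have := add_pow_char_pow (p := 2) (n := 4) x (1 : GaloisField 2 8)
      norm_num at this; simpa using this
    have h32 : (x + 1) ^ 32 = x ^ 32 + 1 := by
      have := add_pow_char_pow (p := 2) (n := 5) x (1 : GaloisField 2 8)
      norm_num at this; simpa using this
    have hexp : (x + 1) ^ 51 = x ^ 51 + x ^ 50 + x ^ 49 + x ^ 48 + x ^ 35 + x ^ 34 + x ^ 33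
        + x ^ 32 + x ^ 19 + x ^ 18 + x ^ 17 + x ^ 16 + x ^ 3 + x ^ 2 + x + 1 := by
      have : (x + 1) ^ 51 = (x ^ 32 + 1) * (x ^ 16 + 1) * (x ^ 2 + 1) * (x + 1) := by
        rw [← h32, ← h16, ← h2]; ring
      rw [this]; ring
    rw [hexp]
    simp only [tr_add']
    have ha : tr 8 (x ^ 2) = tr 8 x := tr_sq' x
    have hb : tr 8 (x ^ 32) = tr 8 (x ^ 16) := by
      rw [show x ^ 32 = (x ^ 16) ^ 2 by ring, tr_sq']
    have hcc : tr 8 (x ^ 48) = tr 8 (x ^ 3) := by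
      rw [show x ^ 48 = (x ^ 3) ^ 16 by ring, tr_pow16']
    have hd : tr 8 (x ^ 34) = tr 8 (x ^ 17) := by
      rw [show x ^ 34 = (x ^ 17) ^ 2 by ring, tr_sq']
    have he : tr 8 (x ^ 33) = tr 8 (x ^ 18) := by
      have : x ^ 33 = (x ^ 18) ^ 16 := by
        rw [show (x ^ 18) ^ 16 = x ^ 256 * x ^ 32 by ring, pow256']; ring
      rw [this, tr_pow16']
    have hf : tr 8 (x ^ 49) = tr 8 (x ^ 19) := by
      have : x ^ 49 = (x ^ 19) ^ 16 := by
        rw [show (x ^ 19) ^ 16 = x ^ 256 * x ^ 48 by ring, pow256']; ring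
      rw [this, tr_pow16']
    have hg : tr 8 (x ^ 50) = tr 8 (x ^ 35) := by
      have : x ^ 50 = (x ^ 35) ^ 16 := by
        rw [show (x ^ 35) ^ 16 = (x ^ 256) ^ 2 * x ^ 48 by ring, pow256']; ring
      rw [this, tr_pow16']
    rw [ha, hb, hcc, hd, he, hf, hg]
    ring_nf
    simp [show (2 : ZMod 2) = 0 by decide]
  · rintro ⟨k, hk⟩
    have h50 : 2 ^ k = 50 := by omega
    have hk6 : k ≤ 5 := by
      by_contra h
      have : 2 ^ 6 ≤ 2 ^ k := Nat.pow_le_pow_right (by norm_num) (by omega)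
      omega
    interval_cases k <;> omega
end
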